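/- arXiv:1102.2535 — 2 statements merged into one kernel-verified Lean document; each statement's English description precedes it below -/
import Mathlib

section
/- Let ξ be a real random variable with mean zero and finite (m+1)-th absolute moment, whose first m moments agree with those of a standard Gaussian, and let f : ℝ → ℝ be m times continuously differentiable with ‖f^{(m)}‖_∞ < ∞. Then |E[ξ f(ξ)] − E[ξ²]·E[f'(ξ)]| ≤ ((m+1)/m!) · E[|ξ|^{m+1}] · ‖f^{(m)}‖_∞. -/
open MeasureTheory ProbabilityTheory

section GAAux
open Real
open scoped NNReal ENNReal

-- master integrability
lemma GA.int_aux (n : ℕ) : Integrable (fun x : ℝ => |x| ^ n * Real.exp (-x ^ 2 / 2)) := by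
  have hdom : Integrable (fun x : ℝ => (n.factorial * Real.exp 1) * Real.exp (-(4:ℝ)⁻¹ * x ^ 2)) :=
    (integrable_exp_neg_mul_sq (by norm_num : (0:ℝ) < 4⁻¹)).const_mul _
  refine hdom.mono' ?_ ?_
  · exact ((measurable_abs.pow_const n).mul
      ((measurable_id.pow_const 2).neg.div_const 2).exp).aestronglyMeasurable
  · filter_upwards with x
    have h1 : |x| ^ n ≤ n.factorial * Real.exp |x| := by
      have := Real.pow_div_factorial_le_exp (x := |x|) (abs_nonneg x) n
      rw [div_le_iff₀ (by positivity)] at this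
      linarith [this]
    have h2 : |x| ≤ x ^ 2 / 4 + 1 := by nlinarith [sq_abs x, sq_nonneg (|x| - 2)]
    have h3 : Real.exp |x| ≤ Real.exp (x ^ 2 / 4 + 1) := Real.exp_le_exp.2 h2
    rw [Real.norm_eq_abs, abs_of_nonneg (by positivity)]
    calc |x| ^ n * Real.exp (-x ^ 2 / 2)
        ≤ (n.factorial * Real.exp (x ^ 2 / 4 + 1)) * Real.exp (-x ^ 2 / 2) := by
          apply mul_le_mul_of_nonneg_right _ (Real.exp_nonneg _)
          exact h1.trans (by gcongr)
      _ = (n.factorial * Real.exp 1) * Real.exp (-(4:ℝ)⁻¹ * x ^ 2) := by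
          rw [mul_assoc, ← Real.exp_add, mul_assoc, ← Real.exp_add]; ring_nf

lemma GA.int_aux' (n : ℕ) : Integrable (fun x : ℝ => x ^ n * Real.exp (-x ^ 2 / 2)) := by
  refine (GA.int_aux n).mono' ?_ ?_
  · exact ((measurable_id.pow_const n).mul
      ((measurable_id.pow_const 2).neg.div_const 2).exp).aestronglyMeasurable
  · filter_upwards with x
    rw [Real.norm_eq_abs, abs_mul, abs_of_nonneg (Real.exp_nonneg _), abs_pow]


lemma GA.pdf_eq (x : ℝ) : gaussianPDFReal 0 1 x = (√(2 * π))⁻¹ * Real.exp (-x ^ 2 / 2) := by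
  simp [gaussianPDFReal]

lemma GA.transfer (h : ℝ → ℝ) :
    ∫ x, h x ∂(gaussianReal 0 1) = ∫ x, gaussianPDFReal 0 1 x * h x := by
  rw [gaussianReal_of_var_ne_zero 0 one_ne_zero]
  have hm : Measurable (fun x => Real.toNNReal (gaussianPDFReal 0 1 x)) :=
    (measurable_gaussianPDFReal 0 1).real_toNNReal
  have : (gaussianPDF 0 1) = fun x => ((Real.toNNReal (gaussianPDFReal 0 1 x) : ℝ≥0) : ℝ≥0∞) := by
    rfl
  rw [this, integral_withDensity_eq_integral_smul hm h]
  congr 1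
  ext x
  rw [NNReal.smul_def, smul_eq_mul, Real.coe_toNNReal _ (gaussianPDFReal_nonneg 0 1 x)]



lemma GA.gauss_pow (n : ℕ) : ∫ x, x ^ n ∂(gaussianReal 0 1)
    = (√(2 * π))⁻¹ * ∫ x, x ^ n * Real.exp (-x ^ 2 / 2) := by
  rw [GA.transfer (fun x => x ^ n), ← integral_const_mul]
  congr 1; ext x; rw [GA.pdf_eq]; ring

lemma GA.deriv_key (n : ℕ) (x : ℝ) :
    HasDerivAt (fun x : ℝ => x ^ (n+1) * Real.exp (-x ^ 2 / 2))
      ((n+1) * x ^ n * Real.exp (-x ^ 2 / 2) - x ^ (n+2) * Real.exp (-x ^ 2 / 2)) x := by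
  have h1 : HasDerivAt (fun x : ℝ => x ^ (n+1)) ((n+1) * x ^ n) x := by
    simpa using hasDerivAt_pow (n+1) x
  have h2 : HasDerivAt (fun x : ℝ => Real.exp (-x ^ 2 / 2)) (-x * Real.exp (-x ^ 2 / 2)) x := by
    have hx : HasDerivAt (fun x : ℝ => -x ^ 2 / 2) (-x) x := by
      have := (hasDerivAt_pow 2 x).neg.div_const 2
      exact this.congr_deriv (by norm_num; ring)
    simpa [mul_comm] using hx.exp
  have := h1.mul h2
  refine this.congr_deriv ?_
  rw [pow_succ, pow_succ]
  ring

lemma GA.base_int : ∫ x : ℝ, x * Real.exp (-x ^ 2 / 2) = 0 := by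
  have hd : ∀ x : ℝ, HasDerivAt (fun x : ℝ => -Real.exp (-x ^ 2 / 2)) (x * Real.exp (-x ^ 2 / 2)) x := by
    intro x
    have hx : HasDerivAt (fun x : ℝ => -x ^ 2 / 2) (-x) x := by
      have := (hasDerivAt_pow 2 x).neg.div_const 2
      exact this.congr_deriv (by norm_num; ring)
    have := hx.exp.neg
    exact this.congr_deriv (by ring)
  have hint : Integrable (fun x : ℝ => x * Real.exp (-x ^ 2 / 2)) := by
    simpa using GA.int_aux' 1
  have hf : Integrable (fun x : ℝ => -Real.exp (-x ^ 2 / 2)) := by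
    have h0 := (GA.int_aux' 0).neg
    apply h0.congr
    filter_upwards with x; simp
  exact integral_eq_zero_of_hasDerivAt_of_integrable hd hint hf

lemma GA.rec_int (n : ℕ) : ∫ x : ℝ, x ^ (n+2) * Real.exp (-x ^ 2 / 2)
    = (n+1) * ∫ x : ℝ, x ^ n * Real.exp (-x ^ 2 / 2) := by
  have hint : Integrable (fun x : ℝ => (n+1) * x ^ n * Real.exp (-x ^ 2 / 2)
      - x ^ (n+2) * Real.exp (-x ^ 2 / 2)) := by
    have h1 := (GA.int_aux' n).const_mul ((n:ℝ)+1)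
    have h2 := GA.int_aux' (n+2)
    simpa [mul_assoc, Pi.sub_def] using h1.sub h2
  have := integral_eq_zero_of_hasDerivAt_of_integrable (GA.deriv_key n) hint (GA.int_aux' (n+1))
  rw [integral_sub (by simpa [mul_assoc] using (GA.int_aux' n).const_mul ((n:ℝ)+1)) (GA.int_aux' (n+2))] at this
  have h3 : ∫ x : ℝ, (n+1) * x ^ n * Real.exp (-x ^ 2 / 2)
      = (n+1) * ∫ x : ℝ, x ^ n * Real.exp (-x ^ 2 / 2) := by
    rw [← integral_const_mul]; congr 1; ext x; ring
  linarith [this, h3.symm.le]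

lemma GA.gauss_one : ∫ x, x ^ 1 ∂(gaussianReal 0 1) = 0 := by
  rw [GA.gauss_pow]
  simp only [pow_one, GA.base_int, mul_zero]

lemma GA.gauss_rec (n : ℕ) : ∫ x, x ^ (n+2) ∂(gaussianReal 0 1)
    = (n+1) * ∫ x, x ^ n ∂(gaussianReal 0 1) := by
  rw [GA.gauss_pow, GA.gauss_pow, GA.rec_int]; ring

lemma GA.gauss_zero : ∫ x, x ^ 0 ∂(gaussianReal 0 1) = 1 := by
  simp

lemma GA.gauss_two : ∫ x, x ^ 2 ∂(gaussianReal 0 1) = 1 := by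
  have := GA.gauss_rec 0
  simpa [GA.gauss_zero] using this


lemma GA.taylor_bound : ∀ (m : ℕ) (f : ℝ → ℝ) (M : ℝ), ContDiff ℝ m f →
    (∀ x, |iteratedDeriv m f x| ≤ M) → ∀ x : ℝ,
    |f x - ∑ k ∈ Finset.range m, iteratedDeriv k f 0 / k.factorial * x ^ k|
      ≤ M * |x| ^ m / m.factorial := by
  intro m
  induction m with
  | zero =>
    intro f M _ hM x
    simpa using hM x
  | succ m ih =>
    intro f M hf hM x
    have hfc : ContDiff ℝ ((m : ℕ∞) + 1) f := by exact_mod_cast hf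
    have hf' : Differentiable ℝ f ∧ ContDiff ℝ m (deriv f) := by
      have h := contDiff_succ_iff_deriv.mp hfc
      exact ⟨h.1, h.2.2⟩
    have hM' : ∀ x, |iteratedDeriv m (deriv f) x| ≤ M := by
      intro x; rw [← iteratedDeriv_succ']; exact hM x
    have IH := ih (deriv f) M hf'.2 hM'
    -- the remainder function and its derivative
    set F : ℝ → ℝ := fun x => f x - ∑ k ∈ Finset.range (m+1), iteratedDeriv k f 0 / k.factorial * x ^ k with hF
    set F' : ℝ → ℝ := fun x => deriv f x - ∑ k ∈ Finset.range m, iteratedDeriv (k+1) f 0 / k.factorial * x ^ k with hF'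
    have hFd : ∀ y : ℝ, HasDerivAt F (F' y) y := by
      intro y
      have h1 : HasDerivAt f (deriv f y) y := (hf'.1 y).hasDerivAt
      have h2 : HasDerivAt (fun x : ℝ => ∑ k ∈ Finset.range (m+1), iteratedDeriv k f 0 / k.factorial * x ^ k)
          (∑ k ∈ Finset.range (m+1), iteratedDeriv k f 0 / k.factorial * (k * y ^ (k-1))) y := by
        apply HasDerivAt.fun_sum
        intro k _
        exact (hasDerivAt_pow k y).const_mul _
      have h3 : (∑ k ∈ Finset.range (m+1), iteratedDeriv k f 0 / k.factorial * (k * y ^ (k-1)))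
          = ∑ k ∈ Finset.range m, iteratedDeriv (k+1) f 0 / k.factorial * y ^ k := by
        rw [Finset.sum_range_succ']
        simp only [Nat.cast_zero, zero_mul, mul_zero, add_zero]
        apply Finset.sum_congr rfl
        intro k _
        have : ((k:ℕ)+1).factorial = (k+1) * k.factorial := rfl
        rw [this]
        push_cast
        have hk : (k.factorial : ℝ) ≠ 0 := Nat.cast_ne_zero.2 k.factorial_ne_zero
        field_simp
      have := h1.sub h2
      rw [h3] at this
      exact this
    have hF'bound : ∀ y : ℝ, |F' y| ≤ M * |y| ^ m / m.factorial := by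
      intro y
      have h := IH y
      simpa only [← iteratedDeriv_succ'] using h
    have hF0 : F 0 = 0 := by
      simp only [hF]
      rw [Finset.sum_eq_single 0]
      · simp [iteratedDeriv_zero]
      · intro k _ hk
        simp [zero_pow hk]
      · simp
    have hF'cont : Continuous F' := by
      have : Continuous (deriv f) := hf'.2.continuous
      fun_prop
    have key : ∀ y : ℝ, F y = ∫ t in (0:ℝ)..y, F' t := by
      intro y
      have := intervalIntegral.integral_eq_sub_of_hasDerivAt (f := F) (f' := F')
        (a := 0) (b := y) (fun t _ => hFd t) (hF'cont.intervalIntegrable 0 y)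
      rw [this, hF0, sub_zero]
    have hMnn : 0 ≤ M := le_trans (abs_nonneg _) (hM 0)
    have hbc : Continuous (fun t : ℝ => M * |t| ^ m / (m.factorial : ℝ)) := by fun_prop
    have hfac : ((m+1).factorial : ℝ) = (m+1) * m.factorial := by
      rw [Nat.factorial_succ]; push_cast; ring
    rcases le_or_gt 0 x with hx | hx
    · have h1 : |F x| ≤ ∫ t in (0:ℝ)..x, |F' t| := by
        rw [key x]
        simpa [Real.norm_eq_abs] using intervalIntegral.norm_integral_le_integral_norm (f := F') (a := 0) (b := x) hx
      have h2 : ∫ t in (0:ℝ)..x, |F' t| ≤ ∫ t in (0:ℝ)..x, M * |t| ^ m / m.factorial := by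
        apply intervalIntegral.integral_mono_on hx
          (hF'cont.abs.intervalIntegrable 0 x) (hbc.intervalIntegrable 0 x)
        intro t _; exact hF'bound t
      have h3 : ∫ t in (0:ℝ)..x, M * |t| ^ m / m.factorial
          = M * |x| ^ (m+1) / (m+1).factorial := by
        have he : ∀ t ∈ Set.uIcc (0:ℝ) x, M * |t| ^ m / m.factorial = M / m.factorial * t ^ m := by
          intro t ht
          rw [Set.uIcc_of_le hx] at ht
          rw [abs_of_nonneg ht.1]; ring
        rw [intervalIntegral.integral_congr he, intervalIntegral.integral_const_mul,
          integral_pow, abs_of_nonneg hx, hfac]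
        simp only [ne_eq, Nat.succ_ne_zero, not_false_iff, zero_pow, sub_zero]
        push_cast
        rw [div_mul_div_comm]
        ring_nf
      calc |F x| ≤ ∫ t in (0:ℝ)..x, |F' t| := h1
        _ ≤ _ := h2
        _ = _ := h3
    · have hx' : x ≤ 0 := hx.le
      have h1 : |F x| ≤ ∫ t in x..(0:ℝ), |F' t| := by
        rw [key x, show (∫ t in (0:ℝ)..x, F' t) = -∫ t in x..(0:ℝ), F' t from
          intervalIntegral.integral_symm x 0, abs_neg]
        simpa [Real.norm_eq_abs] using intervalIntegral.norm_integral_le_integral_norm (f := F') (a := x) (b := 0) hx'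
      have h2 : ∫ t in x..(0:ℝ), |F' t| ≤ ∫ t in x..(0:ℝ), M * |t| ^ m / m.factorial := by
        apply intervalIntegral.integral_mono_on hx'
          (hF'cont.abs.intervalIntegrable x 0) (hbc.intervalIntegrable x 0)
        intro t _; exact hF'bound t
      have h3 : ∫ t in x..(0:ℝ), M * |t| ^ m / m.factorial
          = M * |x| ^ (m+1) / (m+1).factorial := by
        have he : ∀ t ∈ Set.uIcc x (0:ℝ), M * |t| ^ m / m.factorial = M / m.factorial * (-t) ^ m := by
          intro t ht
          rw [Set.uIcc_of_le hx'] at ht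
          rw [abs_of_nonpos ht.2]; ring
        rw [intervalIntegral.integral_congr he, intervalIntegral.integral_const_mul]
        have hcn : ∫ t in x..(0:ℝ), (-t) ^ m = ∫ t in (0:ℝ)..(-x), t ^ m := by
          simpa using intervalIntegral.integral_comp_neg (a := x) (b := 0) (fun t : ℝ => t ^ m)
        rw [hcn, integral_pow, abs_of_nonpos hx', hfac]
        simp only [ne_eq, Nat.succ_ne_zero, not_false_iff, zero_pow, sub_zero]
        push_cast
        rw [div_mul_div_comm]
        ring_nf
      calc |F x| ≤ ∫ t in x..(0:ℝ), |F' t| := h1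
        _ ≤ _ := h2
        _ = _ := h3


lemma GA.lyapunov {Ω : Type*} [MeasurableSpace Ω] (μ : Measure Ω) [IsProbabilityMeasure μ]
    (X : Ω → ℝ) (hXm : Measurable X) (hXnn : ∀ ω, 0 ≤ X ω) {a b : ℕ} (ha : 0 < a) (hab : a < b)
    (hint : Integrable (fun ω => X ω ^ b) μ) :
    ∫ ω, X ω ^ a ∂μ ≤ (∫ ω, X ω ^ b ∂μ) ^ ((a:ℝ)/(b:ℝ)) := by
  have ha' : (0:ℝ) < a := by exact_mod_cast ha
  have hb' : (0:ℝ) < b := by exact_mod_cast ha.trans hab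
  set p : ℝ := (b:ℝ)/(a:ℝ) with hp
  have hp1 : 1 < p := (one_lt_div ha').2 (by exact_mod_cast hab)
  have hpq : p.HolderConjugate (p/(p-1)) := Real.HolderConjugate.conjExponent hp1
  have hpow : ∀ ω, (X ω ^ a : ℝ) ^ p = X ω ^ b := by
    intro ω
    rw [← Real.rpow_natCast (X ω) a, ← Real.rpow_mul (hXnn ω), ← Real.rpow_natCast (X ω) b]
    congr 1
    rw [hp, mul_div_cancel₀ _ ha'.ne']
  have hmem1 : MemLp (fun ω => X ω ^ a) (ENNReal.ofReal p) μ := by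
    have A : ENNReal.ofReal p ≠ 0 := by
      simp [ENNReal.ofReal_eq_zero, not_le, lt_trans zero_lt_one hp1]
    have B : ENNReal.ofReal p ≠ ∞ := ENNReal.ofReal_ne_top
    rw [← memLp_norm_rpow_iff ((hXm.pow_const a).aestronglyMeasurable) A B,
      ENNReal.toReal_ofReal (le_of_lt (lt_trans zero_lt_one hp1)),
      ENNReal.div_self A B, memLp_one_iff_integrable]
    apply hint.congr
    filter_upwards with ω
    rw [Real.norm_eq_abs, abs_pow, abs_of_nonneg (hXnn ω), hpow ω]
  have hmem2 : MemLp (fun _ : Ω => (1:ℝ)) (ENNReal.ofReal (p/(p-1))) μ := memLp_const 1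
  have key := MeasureTheory.integral_mul_le_Lp_mul_Lq_of_nonneg hpq
    (f := fun ω => X ω ^ a) (g := fun _ => (1:ℝ))
    (ae_of_all μ fun ω => pow_nonneg (hXnn ω) a) (ae_of_all μ fun _ => zero_le_one) hmem1 hmem2
  simp only [mul_one, Real.one_rpow, integral_const, Measure.real, measure_univ, ENNReal.toReal_one, smul_eq_mul,
    one_mul] at key
  rw [show (fun ω => (X ω ^ a : ℝ) ^ p) = fun ω => X ω ^ b from funext hpow] at key
  calc ∫ ω, X ω ^ a ∂μ ≤ (∫ ω, X ω ^ b ∂μ) ^ (1/p) := by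
        convert key using 2
      _ = (∫ ω, X ω ^ b ∂μ) ^ ((a:ℝ)/(b:ℝ)) := by
        congr 1
        rw [hp]
        field_simp

end GAAux

/-- Gaussian approximation lemma: if the first `m` moments of `ξ` agree with those of a
standard Gaussian, `E[|ξ|^{m+1}] < ∞`, and `f ∈ C^m` with bounded `m`-th derivative `M`,
then `|E[ξ f(ξ)] − E[ξ²] E[f'(ξ)]| ≤ ((m+1)/m!) E[|ξ|^{m+1}] M`. -/
theorem gaussian_approximation_lemma
    {Ω : Type*} [MeasurableSpace Ω] (μ : Measure Ω) [IsProbabilityMeasure μ]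
    (ξ : Ω → ℝ) (hmeas : Measurable ξ)
    (m : ℕ) (hm : 1 ≤ m)
    (hmoments : ∀ k : ℕ, 1 ≤ k → k ≤ m →
      ∫ ω, (ξ ω) ^ k ∂μ = ∫ x, x ^ k ∂(gaussianReal 0 1))
    (hmomInt : ∀ k : ℕ, k ≤ m + 1 → Integrable (fun ω => |ξ ω| ^ k) μ)
    (f : ℝ → ℝ) (hf : ContDiff ℝ m f) (M : ℝ)
    (hM : ∀ x : ℝ, |iteratedDeriv m f x| ≤ M)
    (hInt₁ : Integrable (fun ω => ξ ω * f (ξ ω)) μ)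
    (hInt₂ : Integrable (fun ω => deriv f (ξ ω)) μ) :
    |(∫ ω, ξ ω * f (ξ ω) ∂μ) - (∫ ω, (ξ ω) ^ 2 ∂μ) * ∫ ω, deriv f (ξ ω) ∂μ|
      ≤ ((m + 1 : ℝ) / (Nat.factorial m : ℝ)) * (∫ ω, |ξ ω| ^ (m + 1) ∂μ) * M := by
  have hMnn : 0 ≤ M := le_trans (abs_nonneg _) (hM 0)
  set c : ℕ → ℝ := fun k => iteratedDeriv k f 0 with hc
  set P : ℝ → ℝ := fun x => ∑ k ∈ Finset.range m, c k / k.factorial * x ^ k with hP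
  set Q : ℝ → ℝ := fun x => ∑ k ∈ Finset.range (m-1), c (k+1) / k.factorial * x ^ k with hQ
  set g : ℕ → ℝ := fun k => ∫ x, x ^ k ∂(gaussianReal 0 1) with hg
  set ν : ℕ → ℝ := fun k => ∫ ω, (ξ ω) ^ k ∂μ with hν
  -- integrability of powers
  have int_pow : ∀ k : ℕ, k ≤ m + 1 → Integrable (fun ω => (ξ ω) ^ k) μ := by
    intro k hk
    refine (hmomInt k hk).mono' ((hmeas.pow_const k).aestronglyMeasurable) ?_
    filter_upwards with ω
    rw [Real.norm_eq_abs, abs_pow]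
  have νg : ∀ k : ℕ, k ≤ m → ν k = g k := by
    intro k hk
    rcases Nat.eq_zero_or_pos k with h0 | h1
    · subst h0; simp [hν, hg]
    · exact hmoments k h1 hk
  -- integrability of polynomial pieces
  have int_xiP : Integrable (fun ω => ξ ω * P (ξ ω)) μ := by
    have : Integrable (fun ω => ∑ k ∈ Finset.range m, c k / k.factorial * (ξ ω) ^ (k+1)) μ := by
      apply integrable_finset_sum
      intro k hk
      exact ((int_pow (k+1) (by simp at hk; omega)).const_mul _)
    apply this.congr
    filter_upwards with ω
    rw [hP, Finset.mul_sum]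
    apply Finset.sum_congr rfl
    intro k _
    ring
  have int_Q : Integrable (fun ω => Q (ξ ω)) μ := by
    apply integrable_finset_sum
    intro k hk
    exact ((int_pow k (by simp at hk; omega)).const_mul _)
  -- values of polynomial integrals
  have val_xiP : ∫ ω, ξ ω * P (ξ ω) ∂μ = ∑ k ∈ Finset.range m, c k / k.factorial * ν (k+1) := by
    rw [show (fun ω => ξ ω * P (ξ ω)) = fun ω => ∑ k ∈ Finset.range m, c k / k.factorial * (ξ ω) ^ (k+1) from ?_]
    · rw [integral_finset_sum]
      · apply Finset.sum_congr rfl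
        intro k _
        rw [integral_const_mul]
      · intro k hk
        exact ((int_pow (k+1) (by simp at hk; omega)).const_mul _)
    · ext ω
      rw [hP, Finset.mul_sum]
      apply Finset.sum_congr rfl
      intro k _
      ring
  have val_Q : ∫ ω, Q (ξ ω) ∂μ = ∑ k ∈ Finset.range (m-1), c (k+1) / k.factorial * ν k := by
    rw [hQ, integral_finset_sum]
    · apply Finset.sum_congr rfl
      intro k _
      rw [integral_const_mul]
    · intro k hk
      exact ((int_pow k (by simp at hk; omega)).const_mul _)
  -- key cancellation identity
  have identity : ∫ ω, ξ ω * P (ξ ω) ∂μ = ν 2 * ∫ ω, Q (ξ ω) ∂μ := by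
    rw [val_xiP, val_Q]
    rcases eq_or_lt_of_le hm with h1 | h2
    · -- m = 1
      rw [← h1]
      simp only [Finset.range_one, Finset.sum_singleton, Nat.sub_self, Finset.range_zero,
        Finset.sum_empty, mul_zero]
      rw [νg 1 hm, hg]
      have h := GA.gauss_one
      simp only [pow_one] at h ⊢
      rw [h, mul_zero]
    · -- m ≥ 2
      have hm2 : 2 ≤ m := h2
      have hν2 : ν 2 = 1 := by rw [νg 2 hm2, hg]; exact GA.gauss_two
      rw [hν2, one_mul]
      have hmm : m = (m - 1) + 1 := by omega
      rw [hmm, Finset.sum_range_succ']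
      have h0 : c 0 / (Nat.factorial 0 : ℝ) * ν (0+1) = 0 := by
        rw [νg 1 (by omega), hg]
        have h := GA.gauss_one
        simp only [pow_one] at h ⊢
        rw [h, mul_zero]
      rw [h0, add_zero]
      apply Finset.sum_congr rfl
      intro k hk
      have hkm : k ≤ m - 1 - 1 := by simp at hk; omega
      have hν1 : ν (k+1+1) = g (k+2) := νg (k+2) (by omega)
      have hν0 : ν k = g k := νg k (by omega)
      rw [hν1, hν0, hg]
      simp only
      rw [GA.gauss_rec k]
      have hfac : ((k+1).factorial : ℝ) = (k+1) * k.factorial := by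
        rw [Nat.factorial_succ]; push_cast; ring
      rw [hfac]
      have hk1 : ((k:ℝ)+1) ≠ 0 := by positivity
      have hk2 : ((k.factorial:ℝ)) ≠ 0 := Nat.cast_ne_zero.2 k.factorial_ne_zero
      field_simp
  -- remainder bounds
  have taylorP := GA.taylor_bound m f M hf hM
  have bound1 : |∫ ω, (ξ ω * f (ξ ω) - ξ ω * P (ξ ω)) ∂μ|
      ≤ M / m.factorial * ∫ ω, |ξ ω| ^ (m+1) ∂μ := by
    have hint : Integrable (fun ω => ξ ω * f (ξ ω) - ξ ω * P (ξ ω)) μ := hInt₁.sub int_xiP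
    calc |∫ ω, (ξ ω * f (ξ ω) - ξ ω * P (ξ ω)) ∂μ|
        ≤ ∫ ω, |ξ ω * f (ξ ω) - ξ ω * P (ξ ω)| ∂μ := by
          simpa [Real.norm_eq_abs] using
            MeasureTheory.norm_integral_le_integral_norm (fun ω => ξ ω * f (ξ ω) - ξ ω * P (ξ ω)) (μ := μ)
      _ ≤ ∫ ω, M / m.factorial * |ξ ω| ^ (m+1) ∂μ := by
          apply integral_mono hint.abs ((hmomInt (m+1) le_rfl).const_mul _)
          intro ω
          dsimp only
          have h1 : |ξ ω * f (ξ ω) - ξ ω * P (ξ ω)| = |ξ ω| * |f (ξ ω) - P (ξ ω)| := by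
            rw [← abs_mul]; congr 1; ring
          rw [h1]
          calc |ξ ω| * |f (ξ ω) - P (ξ ω)| ≤ |ξ ω| * (M * |ξ ω| ^ m / m.factorial) := by
                apply mul_le_mul_of_nonneg_left (taylorP (ξ ω)) (abs_nonneg _)
            _ = M / m.factorial * |ξ ω| ^ (m+1) := by rw [pow_succ]; ring
      _ = M / m.factorial * ∫ ω, |ξ ω| ^ (m+1) ∂μ := integral_const_mul _ _
  -- Taylor bound for deriv f
  have hmm : m = (m - 1) + 1 := by omega
  have hfc : ContDiff ℝ ((m-1 : ℕ) : ℕ∞) (deriv f) ∧ Differentiable ℝ f := by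
    have hfc0 : ContDiff ℝ (((m-1 : ℕ) : ℕ∞) + 1) f := by
      rw [hmm] at hf
      exact_mod_cast hf
    have h := contDiff_succ_iff_deriv.mp hfc0
    exact ⟨h.2.2, h.1⟩
  have hMd : ∀ x, |iteratedDeriv (m-1) (deriv f) x| ≤ M := by
    intro x
    rw [← iteratedDeriv_succ', ← hmm]
    exact hM x
  have taylorQ : ∀ x : ℝ, |deriv f x - Q x| ≤ M * |x| ^ (m-1) / (m-1).factorial := by
    intro x
    have := GA.taylor_bound (m-1) (deriv f) M hfc.1 hMd x
    have hQeq : Q x = ∑ k ∈ Finset.range (m-1), iteratedDeriv k (deriv f) 0 / k.factorial * x ^ k := by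
      rw [hQ]
      apply Finset.sum_congr rfl
      intro k _
      rw [hc, ← iteratedDeriv_succ']
    rw [hQeq]
    exact this
  have bound2 : |∫ ω, (deriv f (ξ ω) - Q (ξ ω)) ∂μ|
      ≤ M / (m-1).factorial * ∫ ω, |ξ ω| ^ (m-1) ∂μ := by
    have hint : Integrable (fun ω => deriv f (ξ ω) - Q (ξ ω)) μ := hInt₂.sub int_Q
    calc |∫ ω, (deriv f (ξ ω) - Q (ξ ω)) ∂μ|
        ≤ ∫ ω, |deriv f (ξ ω) - Q (ξ ω)| ∂μ := by
          simpa [Real.norm_eq_abs] using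
            MeasureTheory.norm_integral_le_integral_norm (fun ω => deriv f (ξ ω) - Q (ξ ω)) (μ := μ)
      _ ≤ ∫ ω, M / (m-1).factorial * |ξ ω| ^ (m-1) ∂μ := by
          apply integral_mono hint.abs ((hmomInt (m-1) (by omega)).const_mul _)
          intro ω
          dsimp only
          calc |deriv f (ξ ω) - Q (ξ ω)| ≤ M * |ξ ω| ^ (m-1) / (m-1).factorial := taylorQ (ξ ω)
            _ = M / (m-1).factorial * |ξ ω| ^ (m-1) := by ring
      _ = M / (m-1).factorial * ∫ ω, |ξ ω| ^ (m-1) ∂μ := integral_const_mul _ _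
  -- moment comparison
  have hν2nn : 0 ≤ ν 2 := integral_nonneg (fun ω => sq_nonneg _)
  have hν2abs : ν 2 = ∫ ω, |ξ ω| ^ 2 ∂μ := by
    refine integral_congr_ae (ae_of_all _ fun ω => ?_)
    exact (sq_abs (ξ ω)).symm
  have momcmp : ν 2 * ∫ ω, |ξ ω| ^ (m-1) ∂μ ≤ ∫ ω, |ξ ω| ^ (m+1) ∂μ := by
    rcases eq_or_lt_of_le hm with h1 | h2
    · rw [← h1]
      simp only [Nat.sub_self, pow_zero, integral_const, Measure.real, measure_univ, ENNReal.toReal_one,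
        smul_eq_mul, one_mul, mul_one]
      rw [hν2abs]
    · have hm2 : 2 ≤ m := h2
      set E : ℝ := ∫ ω, |ξ ω| ^ (m+1) ∂μ with hE
      have hEnn : 0 ≤ E := integral_nonneg (fun ω => by positivity)
      have l1 : ∫ ω, |ξ ω| ^ 2 ∂μ ≤ E ^ ((2:ℝ)/((m:ℝ)+1)) := by
        have := GA.lyapunov μ (fun ω => |ξ ω|) hmeas.abs (fun ω => abs_nonneg _)
          (a := 2) (b := m+1) (by omega) (by omega) (hmomInt (m+1) le_rfl)
        convert this using 2
        push_cast; ring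
      have l2 : ∫ ω, |ξ ω| ^ (m-1) ∂μ ≤ E ^ (((m:ℝ)-1)/((m:ℝ)+1)) := by
        have := GA.lyapunov μ (fun ω => |ξ ω|) hmeas.abs (fun ω => abs_nonneg _)
          (a := m-1) (b := m+1) (by omega) (by omega) (hmomInt (m+1) le_rfl)
        convert this using 2
        have : ((m-1 : ℕ) : ℝ) = (m:ℝ) - 1 := by
          push_cast [Nat.cast_sub hm]; ring
        rw [this]
        push_cast; ring
      have hprod : E ^ ((2:ℝ)/((m:ℝ)+1)) * E ^ (((m:ℝ)-1)/((m:ℝ)+1)) = E := by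
        rw [← Real.rpow_add' hEnn]
        · rw [show (2:ℝ)/((m:ℝ)+1) + ((m:ℝ)-1)/((m:ℝ)+1) = 1 from ?_, Real.rpow_one]
          rw [← add_div, div_eq_one_iff_eq (by positivity)]
          ring
        · rw [← add_div]
          apply div_ne_zero _ (by positivity)
          have hmr : (1:ℝ) ≤ (m:ℝ) := by exact_mod_cast hm
          intro hcon; linarith
      calc ν 2 * ∫ ω, |ξ ω| ^ (m-1) ∂μ
          ≤ E ^ ((2:ℝ)/((m:ℝ)+1)) * E ^ (((m:ℝ)-1)/((m:ℝ)+1)) := by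
            rw [hν2abs]
            apply mul_le_mul l1 l2 (integral_nonneg (fun ω => by positivity))
              (Real.rpow_nonneg hEnn _)
        _ = E := hprod
  -- splitting
  have split1 : ∫ ω, ξ ω * f (ξ ω) ∂μ
      = (∫ ω, (ξ ω * f (ξ ω) - ξ ω * P (ξ ω)) ∂μ) + ∫ ω, ξ ω * P (ξ ω) ∂μ := by
    rw [integral_sub hInt₁ int_xiP]; ring
  have split2 : ∫ ω, deriv f (ξ ω) ∂μ
      = (∫ ω, (deriv f (ξ ω) - Q (ξ ω)) ∂μ) + ∫ ω, Q (ξ ω) ∂μ := by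
    rw [integral_sub hInt₂ int_Q]; ring
  have keyeq : (∫ ω, ξ ω * f (ξ ω) ∂μ) - (∫ ω, (ξ ω) ^ 2 ∂μ) * ∫ ω, deriv f (ξ ω) ∂μ
      = (∫ ω, (ξ ω * f (ξ ω) - ξ ω * P (ξ ω)) ∂μ)
        - ν 2 * ∫ ω, (deriv f (ξ ω) - Q (ξ ω)) ∂μ := by
    have : (∫ ω, (ξ ω) ^ 2 ∂μ) = ν 2 := rfl
    rw [this, split1, split2, mul_add]
    rw [← identity]
    ring
  rw [keyeq]
  have hfacN : m.factorial = m * (m-1).factorial := by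
    conv_lhs => rw [hmm, Nat.factorial_succ, ← hmm]
  have hfac : (m.factorial : ℝ) = m * (m-1).factorial := by exact_mod_cast hfacN
  have hm1 : (0:ℝ) < (m:ℝ) := by exact_mod_cast hm
  have hfacpos : (0:ℝ) < (m.factorial : ℝ) := by exact_mod_cast m.factorial_pos
  have hfac1pos : (0:ℝ) < ((m-1).factorial : ℝ) := by exact_mod_cast (m-1).factorial_pos
  calc |(∫ ω, (ξ ω * f (ξ ω) - ξ ω * P (ξ ω)) ∂μ)
        - ν 2 * ∫ ω, (deriv f (ξ ω) - Q (ξ ω)) ∂μ|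
      ≤ |∫ ω, (ξ ω * f (ξ ω) - ξ ω * P (ξ ω)) ∂μ|
        + ν 2 * |∫ ω, (deriv f (ξ ω) - Q (ξ ω)) ∂μ| := by
        refine (abs_sub _ _).trans ?_
        rw [abs_mul, abs_of_nonneg hν2nn]
    _ ≤ M / m.factorial * (∫ ω, |ξ ω| ^ (m+1) ∂μ)
        + ν 2 * (M / (m-1).factorial * ∫ ω, |ξ ω| ^ (m-1) ∂μ) := by
        apply add_le_add bound1
        exact mul_le_mul_of_nonneg_left bound2 hν2nn
    _ = M / m.factorial * (∫ ω, |ξ ω| ^ (m+1) ∂μ)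
        + M / (m-1).factorial * (ν 2 * ∫ ω, |ξ ω| ^ (m-1) ∂μ) := by ring
    _ ≤ M / m.factorial * (∫ ω, |ξ ω| ^ (m+1) ∂μ)
        + M / (m-1).factorial * (∫ ω, |ξ ω| ^ (m+1) ∂μ) := by
        apply add_le_add le_rfl
        exact mul_le_mul_of_nonneg_left momcmp (by positivity)
    _ = ((m + 1 : ℝ) / (Nat.factorial m : ℝ)) * (∫ ω, |ξ ω| ^ (m + 1) ∂μ) * M := by
        rw [hfac]
        field_simp
        ring
end

section
/- Let μ be a probability measure on a finite set S, let X : S → ℝ be a function with |X(s)| ≤ 1 for all s, and for λ ∈ ℝ define the tilted expectation ω_λ(X) = (Σ_s X(s) e^{λ X(s)} μ(s)) / (Σ_s e^{λ X(s)} μ(s)). Then the m-th derivative of λ ↦ ω_λ(X) is bounded in absolute value by (m+1)! for every λ. -/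
open Finset

/-- Exponentially tilted mean of an observable `X` on a finite set with weights `p`. -/
noncomputable def tiltedMean {S : Type*} [Fintype S] (p : S → ℝ) (X : S → ℝ) (l : ℝ) : ℝ :=
  (∑ s : S, X s * Real.exp (l * X s) * p s) / (∑ s : S, Real.exp (l * X s) * p s)

namespace TiltedMeanAux

open Complex Metric Real

variable {S : Type*} [Fintype S]

/-- Complex version of the tilted mean. -/
noncomputable def cG (p X : S → ℝ) (z : ℂ) : ℂ :=
  (∑ s : S, (X s : ℂ) * Complex.exp (z * (X s : ℂ)) * (p s : ℂ)) /
    (∑ s : S, Complex.exp (z * (X s : ℂ)) * (p s : ℂ))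

variable (p X : S → ℝ)

lemma sum_exp_pos (hp0 : ∀ s, 0 ≤ p s) (hp1 : ∑ s : S, p s = 1) (x : ℝ) :
    0 < ∑ s : S, Real.exp (x * X s) * p s := by
  obtain ⟨s₀, -, hs₀⟩ : ∃ s ∈ (univ : Finset S), (0:ℝ) < p s := by
    apply Finset.exists_lt_of_sum_lt (f := fun _ => (0:ℝ))
    simp [hp1]
  refine Finset.sum_pos' (fun s _ => mul_nonneg (Real.exp_pos _).le (hp0 s))
    ⟨s₀, mem_univ s₀, mul_pos (Real.exp_pos _) hs₀⟩

lemma D_re (z : ℂ) :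
    (∑ s : S, Complex.exp (z * (X s : ℂ)) * (p s : ℂ)).re
      = ∑ s : S, Real.exp (z.re * X s) * Real.cos (z.im * X s) * p s := by
  rw [Complex.re_sum]
  refine Finset.sum_congr rfl fun s _ => ?_
  simp [Complex.mul_re, Complex.mul_im, Complex.exp_re, Complex.exp_im]

lemma D_re_ge (hp0 : ∀ s, 0 ≤ p s) (hX : ∀ s, |X s| ≤ 1) (z : ℂ) (hz : |z.im| ≤ 1) :
    Real.cos 1 * (∑ s : S, Real.exp (z.re * X s) * p s)
      ≤ (∑ s : S, Complex.exp (z * (X s : ℂ)) * (p s : ℂ)).re := by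
  rw [D_re, Finset.mul_sum]
  refine Finset.sum_le_sum fun s _ => ?_
  have habs : |z.im * X s| ≤ 1 := by
    rw [abs_mul]
    calc |z.im| * |X s| ≤ 1 * 1 := by
          exact mul_le_mul hz (hX s) (abs_nonneg _) zero_le_one
      _ = 1 := by norm_num
  have hcos : Real.cos 1 ≤ Real.cos (z.im * X s) := by
    have := Real.cos_le_cos_of_nonneg_of_le_pi (abs_nonneg (z.im * X s))
      (by linarith [Real.pi_gt_three]) habs
    rwa [Real.cos_abs] at this
  have he : 0 < Real.exp (z.re * X s) := Real.exp_pos _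
  nlinarith [mul_nonneg (mul_nonneg (sub_nonneg.mpr hcos) he.le) (hp0 s)]

lemma N_abs_le (hp0 : ∀ s, 0 ≤ p s) (hX : ∀ s, |X s| ≤ 1) (z : ℂ) :
    ‖∑ s : S, (X s : ℂ) * Complex.exp (z * (X s : ℂ)) * (p s : ℂ)‖
      ≤ ∑ s : S, Real.exp (z.re * X s) * p s := by
  refine (norm_sum_le _ _).trans ?_
  refine Finset.sum_le_sum fun s _ => ?_
  rw [norm_mul, norm_mul, Complex.norm_real, Complex.norm_real, Complex.norm_exp, Real.norm_eq_abs, Real.norm_eq_abs]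
  have hre : (z * (X s : ℂ)).re = z.re * X s := by simp [Complex.mul_re]
  rw [hre, _root_.abs_of_nonneg (hp0 s)]
  have he : 0 < Real.exp (z.re * X s) := Real.exp_pos _
  nlinarith [mul_nonneg (mul_nonneg (sub_nonneg.mpr (hX s)) he.le) (hp0 s)]

lemma cos_one_ge_half : (1/2 : ℝ) ≤ Real.cos 1 := by
  have := Real.one_sub_sq_div_two_lt_cos (x := 1) one_ne_zero
  nlinarith

lemma G_abs_le (hp0 : ∀ s, 0 ≤ p s) (hp1 : ∑ s : S, p s = 1) (hX : ∀ s, |X s| ≤ 1)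
    (z : ℂ) (hz : |z.im| ≤ 1) :
    ‖cG p X z‖ ≤ (Real.cos 1)⁻¹ := by
  have hcos : (0:ℝ) < Real.cos 1 := Real.cos_one_pos
  set E := ∑ s : S, Real.exp (z.re * X s) * p s with hE
  have hEpos : 0 < E := sum_exp_pos p X hp0 hp1 z.re
  have hDre := D_re_ge p X hp0 hX z hz
  have hDabs : Real.cos 1 * E ≤ ‖∑ s : S, Complex.exp (z * (X s : ℂ)) * (p s : ℂ)‖ :=
    hDre.trans (Complex.re_le_norm _)
  have hNabs := N_abs_le p X hp0 hX z
  rw [cG, norm_div]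
  calc ‖∑ s : S, (X s : ℂ) * Complex.exp (z * (X s : ℂ)) * (p s : ℂ)‖ /
        ‖∑ s : S, Complex.exp (z * (X s : ℂ)) * (p s : ℂ)‖
      ≤ E / (Real.cos 1 * E) := by
        apply div_le_div₀ hEpos.le hNabs (by positivity) hDabs
    _ = (Real.cos 1)⁻¹ := by
        field_simp

lemma D_ne_zero (hp0 : ∀ s, 0 ≤ p s) (hp1 : ∑ s : S, p s = 1) (hX : ∀ s, |X s| ≤ 1)
    (z : ℂ) (hz : |z.im| < Real.pi / 2) :
    (∑ s : S, Complex.exp (z * (X s : ℂ)) * (p s : ℂ)) ≠ 0 := by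
  obtain ⟨s₀, -, hs₀⟩ : ∃ s ∈ (univ : Finset S), (0:ℝ) < p s := by
    apply Finset.exists_lt_of_sum_lt (f := fun _ => (0:ℝ))
    simp [hp1]
  have hre : 0 < (∑ s : S, Complex.exp (z * (X s : ℂ)) * (p s : ℂ)).re := by
    rw [D_re]
    have hcos : ∀ s : S, 0 < Real.cos (z.im * X s) := by
      intro s
      apply Real.cos_pos_of_mem_Ioo
      constructor
      · have : |z.im * X s| < Real.pi / 2 := by
          rw [abs_mul]
          calc |z.im| * |X s| ≤ |z.im| * 1 :=
                mul_le_mul_of_nonneg_left (hX s) (abs_nonneg _)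
            _ = |z.im| := mul_one _
            _ < Real.pi / 2 := hz
        linarith [neg_abs_le (z.im * X s), le_abs_self (z.im * X s)]
      · calc z.im * X s ≤ |z.im * X s| := le_abs_self _
          _ < Real.pi / 2 := by
            rw [abs_mul]
            calc |z.im| * |X s| ≤ |z.im| * 1 :=
                  mul_le_mul_of_nonneg_left (hX s) (abs_nonneg _)
              _ = |z.im| := mul_one _
              _ < Real.pi / 2 := hz
    refine Finset.sum_pos' (fun s _ => ?_) ⟨s₀, mem_univ s₀, ?_⟩
    · have := (hcos s).le
      have := Real.exp_pos (z.re * X s)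
      have := hp0 s
      positivity
    · have := hcos s₀
      have := Real.exp_pos (z.re * X s₀)
      positivity
  intro h
  rw [h] at hre
  simp at hre

lemma N_differentiable : Differentiable ℂ
    (fun z : ℂ => ∑ s : S, (X s : ℂ) * Complex.exp (z * (X s : ℂ)) * (p s : ℂ)) := by
  apply Differentiable.fun_sum
  intro s _
  exact (((differentiable_id.mul_const _).cexp).const_mul _).mul_const _

lemma D_differentiable : Differentiable ℂ
    (fun z : ℂ => ∑ s : S, Complex.exp (z * (X s : ℂ)) * (p s : ℂ)) := by
  apply Differentiable.fun_sum
  intro s _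
  exact ((differentiable_id.mul_const _).cexp).mul_const _

lemma G_differentiableAt (hp0 : ∀ s, 0 ≤ p s) (hp1 : ∑ s : S, p s = 1) (hX : ∀ s, |X s| ≤ 1)
    (z : ℂ) (hz : |z.im| < Real.pi / 2) :
    DifferentiableAt ℂ (cG p X) z :=
  ((N_differentiable p X) z).div ((D_differentiable p X) z) (D_ne_zero p X hp0 hp1 hX z hz)

/-- The open strip where the denominator does not vanish. -/
def strip : Set ℂ := Complex.im ⁻¹' (Set.Ioo (-(Real.pi / 2)) (Real.pi / 2))

lemma strip_open : IsOpen (strip) := Complex.continuous_im.isOpen_preimage _ isOpen_Ioo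

lemma mem_strip_iff {z : ℂ} : z ∈ strip ↔ |z.im| < Real.pi / 2 := by
  simp [strip, abs_lt, and_comm]

lemma G_analytic (hp0 : ∀ s, 0 ≤ p s) (hp1 : ∑ s : S, p s = 1) (hX : ∀ s, |X s| ≤ 1) :
    ∀ m : ℕ, AnalyticOnNhd ℂ (iteratedDeriv m (cG p X)) strip := by
  intro m
  induction m with
  | zero =>
    simp only [iteratedDeriv_zero]
    apply DifferentiableOn.analyticOnNhd _ strip_open
    exact fun z hz =>
      (G_differentiableAt p X hp0 hp1 hX z (mem_strip_iff.mp hz)).differentiableWithinAt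
  | succ m ih =>
    rw [iteratedDeriv_succ]
    exact ih.deriv

lemma real_eq (x : ℝ) : tiltedMean p X x = (cG p X (x : ℂ)).re := by
  have : cG p X (x : ℂ) = ((tiltedMean p X x : ℝ) : ℂ) := by
    rw [cG, tiltedMean]
    push_cast
    rfl
  rw [this, Complex.ofReal_re]

lemma iteratedDeriv_real_eq (hp0 : ∀ s, 0 ≤ p s) (hp1 : ∑ s : S, p s = 1)
    (hX : ∀ s, |X s| ≤ 1) (m : ℕ) (x : ℝ) :
    iteratedDeriv m (tiltedMean p X) x = (iteratedDeriv m (cG p X) (x : ℂ)).re := by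
  induction m generalizing x with
  | zero => simpa using real_eq p X x
  | succ m ih =>
    rw [iteratedDeriv_succ, iteratedDeriv_succ]
    have hfun : iteratedDeriv m (tiltedMean p X)
        = fun y : ℝ => (iteratedDeriv m (cG p X) (y : ℂ)).re := funext fun y => ih y
    rw [hfun]
    have hx : ((x : ℂ) : ℂ) ∈ strip := by
      rw [mem_strip_iff]
      simp only [Complex.ofReal_im, abs_zero]
      positivity
    have h1 : DifferentiableAt ℂ (iteratedDeriv m (cG p X)) (x : ℂ) :=
      ((G_analytic p X hp0 hp1 hX m) _ hx).differentiableAt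
    have h2 : HasDerivAt (iteratedDeriv m (cG p X))
        (deriv (iteratedDeriv m (cG p X)) (x : ℂ)) (x : ℂ) := h1.hasDerivAt
    have h3 := h2.real_of_complex
    rw [h3.deriv]

lemma im_le_of_mem_closedBall {l : ℝ} {z : ℂ} (hz : z ∈ closedBall (l : ℂ) 1) :
    |z.im| ≤ 1 := by
  have h1 : z.im = (z - (l : ℂ)).im := by simp
  rw [h1]
  calc |(z - (l : ℂ)).im| ≤ ‖z - (l : ℂ)‖ := Complex.abs_im_le_norm _
    _ ≤ 1 := by rwa [← Complex.dist_eq, ← Metric.mem_closedBall]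

lemma norm_iteratedDeriv_le (hp0 : ∀ s, 0 ≤ p s) (hp1 : ∑ s : S, p s = 1)
    (hX : ∀ s, |X s| ≤ 1) (m : ℕ) (l : ℝ) :
    ‖iteratedDeriv m (cG p X) (l : ℂ)‖ ≤ (m.factorial : ℝ) * (Real.cos 1)⁻¹ := by
  have hpi : (1 : ℝ) < Real.pi / 2 := by linarith [Real.pi_gt_three]
  have hd : DifferentiableOn ℂ (cG p X) (closedBall (l : ℂ) ((1 : NNReal) : ℝ)) := by
    intro z hz
    have him : |z.im| ≤ 1 := im_le_of_mem_closedBall (by simpa using hz)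
    exact (G_differentiableAt p X hp0 hp1 hX z (lt_of_le_of_lt him hpi)).differentiableWithinAt
  have hF := hd.hasFPowerSeriesOnBall (R := 1) one_pos
  have key := hF.factorial_smul (1 : ℂ) m
  rw [iteratedDeriv_eq_iteratedFDeriv, ← key]
  have hv : ‖(cauchyPowerSeries (cG p X) (l : ℂ) ((1:NNReal) : ℝ) m) (fun _ => (1:ℂ))‖
      ≤ ‖cauchyPowerSeries (cG p X) (l : ℂ) ((1:NNReal) : ℝ) m‖ := by
    have := (cauchyPowerSeries (cG p X) (l : ℂ) ((1:NNReal) : ℝ) m).le_opNorm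
      (fun _ => (1:ℂ))
    simpa using this
  have hnorm : ‖cauchyPowerSeries (cG p X) (l : ℂ) ((1:NNReal) : ℝ) m‖ ≤ (Real.cos 1)⁻¹ := by
    have hb := norm_cauchyPowerSeries_le (cG p X) (l : ℂ) ((1:NNReal) : ℝ) m
    have hint : (∫ θ : ℝ in (0)..2 * Real.pi, ‖cG p X (circleMap (l : ℂ) ((1:NNReal) : ℝ) θ)‖)
        ≤ 2 * Real.pi * (Real.cos 1)⁻¹ := by
      have hcont : Continuous fun θ : ℝ => ‖cG p X (circleMap (l : ℂ) ((1:NNReal) : ℝ) θ)‖ := by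
        apply Continuous.norm
        have hc : Continuous (circleMap (l : ℂ) ((1:NNReal) : ℝ)) := continuous_circleMap _ _
        have hN : Continuous
            (fun z : ℂ => ∑ s : S, (X s : ℂ) * Complex.exp (z * (X s : ℂ)) * (p s : ℂ)) :=
          (N_differentiable p X).continuous
        have hD : Continuous
            (fun z : ℂ => ∑ s : S, Complex.exp (z * (X s : ℂ)) * (p s : ℂ)) :=
          (D_differentiable p X).continuous
        refine (hN.comp hc).div (hD.comp hc) fun θ => ?_
        apply D_ne_zero p X hp0 hp1 hX
        have : circleMap (l : ℂ) ((1:NNReal) : ℝ) θ ∈ closedBall (l : ℂ) 1 := by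
          have := circleMap_mem_sphere (l : ℂ) (R := ((1:NNReal) : ℝ)) (by norm_num) θ
          simp only [NNReal.coe_one] at this ⊢
          exact sphere_subset_closedBall this
        exact lt_of_le_of_lt (im_le_of_mem_closedBall this) hpi
      calc (∫ θ : ℝ in (0)..2 * Real.pi, ‖cG p X (circleMap (l : ℂ) ((1:NNReal) : ℝ) θ)‖)
          ≤ ∫ _ : ℝ in (0)..2 * Real.pi, (Real.cos 1)⁻¹ := by
            apply intervalIntegral.integral_mono_on Real.two_pi_pos.le
              (hcont.intervalIntegrable _ _) intervalIntegrable_const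
            intro θ _
            apply G_abs_le p X hp0 hp1 hX
            apply im_le_of_mem_closedBall
            have := circleMap_mem_sphere (l : ℂ) (R := ((1:NNReal) : ℝ)) (by norm_num) θ
            simp only [NNReal.coe_one] at this ⊢
            exact sphere_subset_closedBall this
        _ = 2 * Real.pi * (Real.cos 1)⁻¹ := by
            rw [intervalIntegral.integral_const, smul_eq_mul]
            ring
    calc ‖cauchyPowerSeries (cG p X) (l : ℂ) ((1:NNReal) : ℝ) m‖
        ≤ ((2 * Real.pi)⁻¹ *
            ∫ θ : ℝ in (0)..2 * Real.pi, ‖cG p X (circleMap (l : ℂ) ((1:NNReal) : ℝ) θ)‖) *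
            |((1:NNReal) : ℝ)|⁻¹ ^ m := hb
      _ ≤ ((2 * Real.pi)⁻¹ * (2 * Real.pi * (Real.cos 1)⁻¹)) * 1 := by
          simp only [NNReal.coe_one, abs_one, inv_one, one_pow, mul_one]
          exact mul_le_mul_of_nonneg_left hint (by positivity)
      _ = (Real.cos 1)⁻¹ := by
          field_simp
  calc ‖m.factorial • (cauchyPowerSeries (cG p X) (l : ℂ) ((1:NNReal) : ℝ) m) fun _ => (1:ℂ)‖
      = (m.factorial : ℝ) *
        ‖(cauchyPowerSeries (cG p X) (l : ℂ) ((1:NNReal) : ℝ) m) fun _ => (1:ℂ)‖ := by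
        rw [← Nat.cast_smul_eq_nsmul ℝ, norm_smul]
        simp
    _ ≤ (m.factorial : ℝ) * (Real.cos 1)⁻¹ := by
        apply mul_le_mul_of_nonneg_left (hv.trans hnorm) (by positivity)

end TiltedMeanAux

/-- The `m`-th derivative in `λ` of the tilted mean of a `±1`-bounded observable is
bounded in absolute value by `(m+1)!`. -/
theorem tiltedMean_iteratedDeriv_bound
    {S : Type*} [Fintype S] [Nonempty S] (p : S → ℝ)
    (hp0 : ∀ s, 0 ≤ p s) (hp1 : ∑ s : S, p s = 1)
    (X : S → ℝ) (hX : ∀ s, |X s| ≤ 1) (m : ℕ) (l : ℝ) :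
    |iteratedDeriv m (tiltedMean p X) l| ≤ ((m + 1).factorial : ℝ) := by
  cases m with
  | zero =>
    rw [iteratedDeriv_zero]
    have hden := TiltedMeanAux.sum_exp_pos p X hp0 hp1 l
    have hnum : |∑ s : S, X s * Real.exp (l * X s) * p s|
        ≤ ∑ s : S, Real.exp (l * X s) * p s := by
      refine (Finset.abs_sum_le_sum_abs _ _).trans (Finset.sum_le_sum fun s _ => ?_)
      rw [abs_mul, abs_mul, abs_of_nonneg (Real.exp_pos _).le, abs_of_nonneg (hp0 s)]
      have he := Real.exp_pos (l * X s)
      nlinarith [mul_nonneg (mul_nonneg (sub_nonneg.mpr (hX s)) he.le) (hp0 s)]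
    rw [tiltedMean, abs_div, abs_of_pos hden]
    calc |∑ s : S, X s * Real.exp (l * X s) * p s| / (∑ s : S, Real.exp (l * X s) * p s)
        ≤ (∑ s : S, Real.exp (l * X s) * p s) / (∑ s : S, Real.exp (l * X s) * p s) := by
          gcongr
      _ = 1 := div_self hden.ne'
      _ ≤ _ := by norm_num [Nat.factorial]
  | succ k =>
    have h1 := TiltedMeanAux.iteratedDeriv_real_eq p X hp0 hp1 hX (k + 1) l
    have h2 := TiltedMeanAux.norm_iteratedDeriv_le p X hp0 hp1 hX (k + 1) l
    rw [h1]
    have h3 : |(iteratedDeriv (k + 1) (TiltedMeanAux.cG p X) (l : ℂ)).re|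
        ≤ ‖iteratedDeriv (k + 1) (TiltedMeanAux.cG p X) (l : ℂ)‖ :=
      Complex.abs_re_le_norm _
    have hcos : (1/2 : ℝ) ≤ Real.cos 1 := TiltedMeanAux.cos_one_ge_half
    have hcospos : (0:ℝ) < Real.cos 1 := Real.cos_one_pos
    have hinv : (Real.cos 1)⁻¹ ≤ 2 := by
      rw [inv_le_comm₀ (by positivity) (by norm_num)]
      linarith
    calc |(iteratedDeriv (k + 1) (TiltedMeanAux.cG p X) (l : ℂ)).re|
        ≤ ((k+1).factorial : ℝ) * (Real.cos 1)⁻¹ := h3.trans h2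
      _ ≤ ((k+1).factorial : ℝ) * 2 := by
          apply mul_le_mul_of_nonneg_left hinv (by positivity)
      _ ≤ ((k + 1 + 1).factorial : ℝ) := by
          rw [Nat.factorial_succ (k+1)]
          push_cast
          nlinarith [Nat.one_le_iff_ne_zero.mpr (Nat.factorial_ne_zero (k+1)),
            (Nat.cast_le (α := ℝ)).mpr (Nat.one_le_iff_ne_zero.mpr (Nat.factorial_ne_zero (k+1)))]
end
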